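/- Let n, m ≥ 1 be integers, let c > 0 be real, and let Q be an (n,m) real matrix with QᵀQ = I_m. Let μ be the centered multivariate Gaussian measure on ℝ^{n²} with covariance matrix c·M_n (which is positive semidefinite). Then the pushforward of μ under the linear map x ↦ (Qᵀ ⊗ Qᵀ) x equals the centered multivariate Gaussian measure on ℝ^{m²} with covariance matrix c·M_m. -/

import Mathlib

open Matrix

/-- Column-stacking `vec` of a square matrix, indexed by pairs `(i, j)` with
`(vec T) (i, j) = T i j`. -/
def vecM {n : ℕ} (T : Matrix (Fin n) (Fin n) ℝ) : Fin n × Fin n → ℝ :=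
  fun p => T p.1 p.2

/-- The commutation matrix `C_n`, satisfying `C_n (vec T) = vec Tᵀ`. -/
def commMat (n : ℕ) : Matrix (Fin n × Fin n) (Fin n × Fin n) ℝ :=
  Matrix.of fun p q => if p.1 = q.2 ∧ p.2 = q.1 then 1 else 0

/-- The matrix `M_n = I_{n²} + C_n + (vec I_n)(vec I_n)ᵀ`. -/
def Mmat (n : ℕ) : Matrix (Fin n × Fin n) (Fin n × Fin n) ℝ :=
  1 + commMat n + Matrix.vecMulVec (vecM (1 : Matrix (Fin n) (Fin n) ℝ))
    (vecM (1 : Matrix (Fin n) (Fin n) ℝ))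


open MeasureTheory ProbabilityTheory

/-- The centered multivariate Gaussian measure on `ι → ℝ` with (positive
semidefinite) covariance matrix `S`: the pushforward of the standard Gaussian
product measure under the square root of `S`. -/
noncomputable def centeredGaussian {ι : Type*} [Fintype ι] [DecidableEq ι]
    (S : Matrix ι ι ℝ) (hS : S.PosSemidef) : Measure (ι → ℝ) :=
  (Measure.pi fun _ : ι => gaussianReal 0 1).map fun x =>
    ((hS.1.eigenvectorUnitary.1 * diagonal (Real.sqrt ∘ hS.1.eigenvalues) *
      (star hS.1.eigenvectorUnitary : Matrix ι ι ℝ))).mulVec x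

namespace Matrix.PosSemidef
variable {ι : Type*} [Fintype ι] [DecidableEq ι] {S : Matrix ι ι ℝ}

noncomputable def sqrt (hS : S.PosSemidef) : Matrix ι ι ℝ :=
  hS.1.eigenvectorUnitary.1 * diagonal (Real.sqrt ∘ hS.1.eigenvalues) *
    (star hS.1.eigenvectorUnitary : Matrix ι ι ℝ)

lemma sqrt_isHermitian (hS : S.PosSemidef) : hS.sqrt.IsHermitian := by
  unfold sqrt
  simp [IsHermitian, Matrix.mul_assoc, Matrix.star_eq_conjTranspose]

lemma sqrt_mul_self (hS : S.PosSemidef) : hS.sqrt * hS.sqrt = S := by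
  unfold sqrt
  have hU : (star hS.1.eigenvectorUnitary : Matrix ι ι ℝ) * hS.1.eigenvectorUnitary.1 = 1 :=
    Unitary.coe_star_mul_self _
  have hD : diagonal (Real.sqrt ∘ hS.1.eigenvalues) * diagonal (Real.sqrt ∘ hS.1.eigenvalues)
      = diagonal (RCLike.ofReal ∘ hS.1.eigenvalues) := by
    rw [diagonal_mul_diagonal]
    congr 1
    funext i
    simp [Real.mul_self_sqrt (hS.eigenvalues_nonneg i)]
  conv_rhs => rw [hS.1.spectral_theorem, Unitary.conjStarAlgAut_apply]
  rw [← hD]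
  simp only [Matrix.mul_assoc]
  rw [← Matrix.mul_assoc (star _ : Matrix ι ι ℝ) _ , hU, Matrix.one_mul]

end Matrix.PosSemidef

lemma centeredGaussian_eq {ι : Type*} [Fintype ι] [DecidableEq ι]
    (S : Matrix ι ι ℝ) (hS : S.PosSemidef) : centeredGaussian S hS =
      (Measure.pi fun _ : ι => gaussianReal 0 1).map fun x => hS.sqrt.mulVec x := rfl

section MeasureHelpers

variable {ι κ : Type*}

/-- The standard Gaussian product measure. -/
noncomputable def stdPi (ι : Type*) [Fintype ι] : Measure (ι → ℝ) :=
  Measure.pi fun _ : ι => gaussianReal 0 1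

lemma measurable_mulVec [Fintype κ] (M : Matrix ι κ ℝ) :
    Measurable fun x : κ → ℝ => M *ᵥ x := by
  refine measurable_pi_lambda _ fun i => ?_
  show Measurable fun x : κ → ℝ => ∑ j, M i j * x j
  exact Finset.measurable_sum _ fun j _ => (measurable_pi_apply j).const_mul _

lemma lintegral_fin_prod : ∀ {n : ℕ} (μ : Measure ℝ) [SigmaFinite μ]
    (g : Fin n → ℝ → ENNReal), (∀ i, Measurable (g i)) →
    ∫⁻ x, ∏ i, g i (x i) ∂(Measure.pi fun _ : Fin n => μ) = ∏ i, ∫⁻ y, g i y ∂μ := by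
  intro n
  induction n with
  | zero =>
    intro μ _ g hg
    simp [lintegral_const, Measure.pi_univ]
  | succ n ih =>
    intro μ _ g hg
    have hmeasF : Measurable fun x : Fin (n + 1) → ℝ => ∏ i, g i (x i) :=
      Finset.measurable_prod _ fun i _ => (hg i).comp (measurable_pi_apply i)
    rw [← ((measurePreserving_piFinSuccAbove (fun _ : Fin (n + 1) => μ) 0).symm).lintegral_comp
      hmeasF]
    have hsymm : ∀ (z : ℝ × (Fin n → ℝ)),
        (MeasurableEquiv.piFinSuccAbove (fun _ : Fin (n + 1) => ℝ) 0).symm z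
          = Fin.cons z.1 (fun j => z.2 j) := by
      intro z
      rw [MeasurableEquiv.piFinSuccAbove_symm_apply]
      simp [Fin.insertNthEquiv, Fin.insertNth_zero]
    calc ∫⁻ z, ∏ i, g i ((MeasurableEquiv.piFinSuccAbove (fun _ : Fin (n + 1) => ℝ) 0).symm z i)
          ∂(μ.prod (Measure.pi fun _ : Fin n => μ))
        = ∫⁻ z : ℝ × (Fin n → ℝ), g 0 z.1 * ∏ j : Fin n, g j.succ (z.2 j)
          ∂(μ.prod (Measure.pi fun _ : Fin n => μ)) := by
          refine lintegral_congr fun z => ?_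
          rw [hsymm z, Fin.prod_univ_succ]
          simp
      _ = (∫⁻ y, g 0 y ∂μ) * ∫⁻ y : Fin n → ℝ, ∏ j : Fin n, g j.succ (y j)
          ∂(Measure.pi fun _ : Fin n => μ) :=
          lintegral_prod_mul (hg 0).aemeasurable
            (Finset.measurable_prod _ fun j _ =>
              (hg _).comp (measurable_pi_apply j)).aemeasurable
      _ = (∫⁻ y, g 0 y ∂μ) * ∏ j : Fin n, ∫⁻ y, g j.succ y ∂μ := by
          rw [ih μ _ fun j => hg _]
      _ = ∏ i, ∫⁻ y, g i y ∂μ := by rw [Fin.prod_univ_succ]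

lemma lintegral_pi_prod [Fintype ι] (μ : Measure ℝ) [SigmaFinite μ]
    (g : ι → ℝ → ENNReal) (hg : ∀ i, Measurable (g i)) :
    ∫⁻ x, ∏ i, g i (x i) ∂(Measure.pi fun _ : ι => μ) = ∏ i, ∫⁻ y, g i y ∂μ := by
  classical
  set E := Fintype.equivFin ι with hE
  have hmp := measurePreserving_piCongrLeft (fun _ : ι => μ) E.symm
  have hF : Measurable fun x : ι → ℝ => ∏ i, g i (x i) :=
    Finset.measurable_prod _ fun i _ => (hg i).comp (measurable_pi_apply i)
  rw [← hmp.lintegral_comp hF]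
  have key : ∀ y : Fin (Fintype.card ι) → ℝ,
      ∏ i, g i ((MeasurableEquiv.piCongrLeft (fun _ : ι => ℝ) E.symm) y i)
        = ∏ k, g (E.symm k) (y k) := by
    intro y
    rw [← Equiv.prod_comp E.symm
      (fun i => g i ((MeasurableEquiv.piCongrLeft (fun _ : ι => ℝ) E.symm) y i))]
    refine Finset.prod_congr rfl fun k _ => ?_
    rw [MeasurableEquiv.coe_piCongrLeft, Equiv.piCongrLeft_apply_apply]
  calc ∫⁻ y, ∏ i, g i ((MeasurableEquiv.piCongrLeft (fun _ : ι => ℝ) E.symm) y i)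
        ∂(Measure.pi fun _ : Fin (Fintype.card ι) => μ)
      = ∫⁻ y, ∏ k, g (E.symm k) (y k) ∂(Measure.pi fun _ : Fin (Fintype.card ι) => μ) :=
        lintegral_congr key
    _ = ∏ k, ∫⁻ y, g (E.symm k) y ∂μ := lintegral_fin_prod μ _ fun k => hg _
    _ = ∏ i, ∫⁻ y, g i y ∂μ := Equiv.prod_comp E.symm fun i => ∫⁻ y, g i y ∂μ

lemma stdPi_eq_withDensity [Fintype ι] :
    stdPi ι = (volume : Measure (ι → ℝ)).withDensity fun x => ∏ i, gaussianPDF 0 1 (x i) := by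
  refine Measure.pi_eq fun s hs => ?_
  rw [withDensity_apply _ (MeasurableSet.univ_pi hs),
    ← lintegral_indicator (MeasurableSet.univ_pi hs)]
  have hind : ∀ x : ι → ℝ,
      (Set.univ.pi s).indicator (fun x => ∏ i, gaussianPDF 0 1 (x i)) x
        = ∏ i, (s i).indicator (gaussianPDF 0 1) (x i) := by
    intro x
    by_cases hx : x ∈ Set.univ.pi s
    · rw [Set.indicator_of_mem hx]
      exact Finset.prod_congr rfl fun i _ =>
        (Set.indicator_of_mem (hx i (Set.mem_univ i)) _).symm
    · rw [Set.indicator_of_notMem hx]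
      rw [Set.mem_univ_pi] at hx
      push_neg at hx
      obtain ⟨i, hi⟩ := hx
      exact (Finset.prod_eq_zero (Finset.mem_univ i) (Set.indicator_of_notMem hi _)).symm
  calc ∫⁻ x, (Set.univ.pi s).indicator (fun x => ∏ i, gaussianPDF 0 1 (x i)) x ∂volume
      = ∫⁻ x, ∏ i, (s i).indicator (gaussianPDF 0 1) (x i) ∂volume := lintegral_congr hind
    _ = ∏ i, ∫⁻ y, (s i).indicator (gaussianPDF 0 1) y ∂volume := by
        rw [volume_pi]
        exact lintegral_pi_prod _ _ fun i => (measurable_gaussianPDF 0 1).indicator (hs i)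
    _ = ∏ i, gaussianReal 0 1 (s i) := by
        refine Finset.prod_congr rfl fun i _ => ?_
        rw [lintegral_indicator (hs i), ← gaussianReal_apply 0 one_ne_zero]

lemma prod_gaussianPDF_eq [Fintype ι] {y z : ι → ℝ}
    (h : ∑ i, y i ^ 2 = ∑ i, z i ^ 2) :
    ∏ i, gaussianPDF 0 1 (y i) = ∏ i, gaussianPDF 0 1 (z i) := by
  have key : ∀ w : ι → ℝ, ∏ i, gaussianPDFReal 0 1 (w i)
      = (Real.sqrt (2 * Real.pi))⁻¹ ^ Fintype.card ι * Real.exp (-(∑ i, w i ^ 2) / 2) := by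
    intro w
    simp only [gaussianPDFReal_def, NNReal.coe_one, mul_one, sub_zero]
    rw [Finset.prod_mul_distrib, Finset.prod_const, ← Real.exp_sum, Finset.card_univ]
    congr 1
    rw [← Finset.sum_neg_distrib, Finset.sum_div]
  have hnn : ∀ (w : ι → ℝ) (i : ι), i ∈ Finset.univ → 0 ≤ gaussianPDFReal 0 1 (w i) :=
    fun w i _ => gaussianPDFReal_nonneg 0 1 (w i)
  simp only [gaussianPDF_def]
  rw [← ENNReal.ofReal_prod_of_nonneg (hnn y), ← ENNReal.ofReal_prod_of_nonneg (hnn z),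
    key y, key z, h]

lemma map_withDensity_equiv {α β : Type*} [MeasurableSpace α] [MeasurableSpace β]
    (e : α ≃ᵐ β) (μ : Measure α) (F : α → ENNReal) (hF : Measurable F) :
    (μ.withDensity F).map e = (μ.map e).withDensity fun y => F (e.symm y) := by
  ext s hs
  rw [Measure.map_apply e.measurable hs, withDensity_apply _ (e.measurable hs),
    withDensity_apply _ hs, setLIntegral_map (f := fun y => F (e.symm y)) hs (hF.comp e.symm.measurable) e.measurable]
  refine lintegral_congr fun x => ?_
  rw [MeasurableEquiv.symm_apply_apply]

end MeasureHelpers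

section Orthogonal

variable {ι κ : Type*}

lemma sumsq_mulVec [Fintype κ] [DecidableEq κ] (M : Matrix κ κ ℝ) (hM : M * Mᵀ = 1)
    (x : κ → ℝ) : ∑ i, (M *ᵥ x) i ^ 2 = ∑ i, x i ^ 2 := by
  have h1 : (M *ᵥ x) ⬝ᵥ (M *ᵥ x) = x ⬝ᵥ x := by
    rw [Matrix.dotProduct_mulVec, ← Matrix.vecMul_transpose M x, Matrix.vecMul_vecMul,
      mul_eq_one_comm.mp hM, Matrix.vecMul_one]
  simpa [dotProduct, pow_two] using h1

lemma map_stdPi_orthogonal [Fintype κ] [DecidableEq κ] (O : Matrix κ κ ℝ)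
    (hO : O * Oᵀ = 1) : (stdPi κ).map O.mulVec = stdPi κ := by
  have hOO : Oᵀ * O = 1 := mul_eq_one_comm.mp hO
  have hdet2 : O.det * O.det = 1 := by
    have h1 := congrArg Matrix.det hO
    rwa [Matrix.det_mul, Matrix.det_transpose, Matrix.det_one] at h1
  have hdet : O.det ≠ 0 := by
    intro h0
    rw [h0, zero_mul] at hdet2
    exact zero_ne_one hdet2
  have habs : |O.det| = 1 := by
    rcases mul_self_eq_one_iff.mp hdet2 with h1 | h1 <;> rw [h1] <;> norm_num
  set F : (κ → ℝ) → ENNReal := fun x => ∏ i, gaussianPDF 0 1 (x i) with hFdef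
  have hFmeas : Measurable F :=
    Finset.measurable_prod _ fun i _ => (measurable_gaussianPDF 0 1).comp (measurable_pi_apply i)
  set e : (κ → ℝ) ≃ᵐ (κ → ℝ) :=
    { toFun := O.mulVec
      invFun := Oᵀ.mulVec
      left_inv := fun x => by rw [Matrix.mulVec_mulVec, hOO, Matrix.one_mulVec]
      right_inv := fun x => by rw [Matrix.mulVec_mulVec, hO, Matrix.one_mulVec]
      measurable_toFun := measurable_mulVec O
      measurable_invFun := measurable_mulVec Oᵀ } with hedef
  have hmap : (stdPi κ).map O.mulVec
      = ((volume : Measure (κ → ℝ)).map e).withDensity fun y => F (e.symm y) := by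
    rw [stdPi_eq_withDensity]
    exact map_withDensity_equiv e _ F hFmeas
  have hvol : (volume : Measure (κ → ℝ)).map e = volume := by
    have hcoe : (⇑e : (κ → ℝ) → κ → ℝ) = ⇑(Matrix.toLin' O) := by
      funext x
      exact (Matrix.toLin'_apply O x).symm
    rw [hcoe, Real.map_matrix_volume_pi_eq_smul_volume_pi hdet, abs_inv, habs, inv_one,
      ENNReal.ofReal_one, one_smul]
  have hdens : (fun y => F (e.symm y)) = F := by
    funext y
    refine prod_gaussianPDF_eq ?_
    exact sumsq_mulVec Oᵀ (by rw [Matrix.transpose_transpose]; exact hOO) y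
  rw [hmap, hvol, hdens, ← stdPi_eq_withDensity]

lemma map_stdPi_eval [Fintype ι] [Fintype κ] (f : ι → κ) (hf : Function.Injective f) :
    (stdPi κ).map (fun x (i : ι) => x (f i)) = stdPi ι := by
  classical
  refine (Measure.pi_eq fun s hs => ?_).symm
  rw [Measure.map_apply (measurable_pi_lambda _ fun i => measurable_pi_apply (f i))
    (MeasurableSet.univ_pi hs)]
  set t : κ → Set ℝ := fun k => if h : ∃ i, f i = k then s h.choose else Set.univ with htdef
  have hpre : (fun x (i : ι) => x (f i)) ⁻¹' Set.univ.pi s = Set.univ.pi t := by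
    ext x
    simp only [Set.mem_preimage, Set.mem_univ_pi]
    constructor
    · intro hx k
      by_cases h : ∃ i, f i = k
      · simp only [t, dif_pos h]
        have h2 := hx h.choose
        rwa [h.choose_spec] at h2
      · simp [t, dif_neg h]
    · intro hx i
      have hk := hx (f i)
      have h : ∃ i', f i' = f i := ⟨i, rfl⟩
      simp only [t, dif_pos h] at hk
      rwa [show h.choose = i from hf h.choose_spec] at hk
  have ht : ∀ i : ι, t (f i) = s i := by
    intro i
    have h : ∃ i', f i' = f i := ⟨i, rfl⟩
    simp only [t, dif_pos h]
    rw [show h.choose = i from hf h.choose_spec]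
  rw [hpre, stdPi, Measure.pi_pi]
  calc ∏ k, gaussianReal 0 1 (t k)
      = ∏ k ∈ Finset.univ.image f, gaussianReal 0 1 (t k) := by
        refine (Finset.prod_subset (Finset.subset_univ _) fun k _ hk => ?_).symm
        have hnk : ¬∃ i, f i = k := by
          intro ⟨i, hi⟩
          exact hk (Finset.mem_image.mpr ⟨i, Finset.mem_univ i, hi⟩)
        simp [t, dif_neg hnk]
    _ = ∏ i, gaussianReal 0 1 (t (f i)) := Finset.prod_image fun i _ j _ hij => hf hij
    _ = ∏ i, gaussianReal 0 1 (s i) := Finset.prod_congr rfl fun i _ => by rw [ht i]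

end Orthogonal

section Polar

open scoped RealInnerProductSpace

variable {ι κ : Type*}

lemma exists_orthogonal_factor [Fintype ι] [Fintype κ] [DecidableEq κ]
    (X Y : Matrix ι κ ℝ) (h : X * Xᵀ = Y * Yᵀ) :
    ∃ O : Matrix κ κ ℝ, O * Oᵀ = 1 ∧ X = Y * O := by
  classical
  have hdp : ∀ (M : Matrix ι κ ℝ) (u w : ι → ℝ),
      (Mᵀ *ᵥ u) ⬝ᵥ (Mᵀ *ᵥ w) = (u ᵥ* (M * Mᵀ)) ⬝ᵥ w := by
    intro M u w
    rw [Matrix.dotProduct_mulVec, Matrix.mulVec_transpose, Matrix.vecMul_vecMul]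
  let TX : (ι → ℝ) →ₗ[ℝ] EuclideanSpace ℝ κ :=
    { toFun := fun u => WithLp.toLp 2 (Xᵀ *ᵥ u)
      map_add' := fun u w => by rw [Matrix.mulVec_add]; rfl
      map_smul' := fun c u => by rw [Matrix.mulVec_smul]; rfl }
  let TY : (ι → ℝ) →ₗ[ℝ] EuclideanSpace ℝ κ :=
    { toFun := fun u => WithLp.toLp 2 (Yᵀ *ᵥ u)
      map_add' := fun u w => by rw [Matrix.mulVec_add]; rfl
      map_smul' := fun c u => by rw [Matrix.mulVec_smul]; rfl }
  have hipdot : ∀ a b : EuclideanSpace ℝ κ, (inner ℝ a b : ℝ) = ∑ k, a k * b k := by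
    intro a b
    simp [PiLp.inner_apply, RCLike.inner_apply, conj_trivial, mul_comm]
  have hinner : ∀ u w : ι → ℝ, ⟪TX u, TX w⟫ = ⟪TY u, TY w⟫ := by
    intro u w
    calc ⟪TX u, TX w⟫ = (Xᵀ *ᵥ u) ⬝ᵥ (Xᵀ *ᵥ w) := hipdot _ _
      _ = (u ᵥ* (X * Xᵀ)) ⬝ᵥ w := hdp X u w
      _ = (u ᵥ* (Y * Yᵀ)) ⬝ᵥ w := by rw [h]
      _ = (Yᵀ *ᵥ u) ⬝ᵥ (Yᵀ *ᵥ w) := (hdp Y u w).symm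
      _ = ⟪TY u, TY w⟫ := (hipdot (TY u) (TY w)).symm
  have hker : LinearMap.ker TY ≤ LinearMap.ker TX := by
    intro u hu
    rw [LinearMap.mem_ker] at hu ⊢
    have h0 : ⟪TX u, TX u⟫ = 0 := by rw [hinner, hu, inner_zero_right]
    exact inner_self_eq_zero.mp h0
  let g : ↥(LinearMap.range TY) →ₗ[ℝ] EuclideanSpace ℝ κ :=
    ((LinearMap.ker TY).liftQ TX hker) ∘ₗ
      ((LinearMap.quotKerEquivRange TY).symm : _ ≃ₗ[ℝ] _).toLinearMap
  have hgapp : ∀ u : ι → ℝ, g ⟨TY u, LinearMap.mem_range_self TY u⟩ = TX u := by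
    intro u
    have h1 : (LinearMap.quotKerEquivRange TY) (Submodule.Quotient.mk u)
        = ⟨TY u, LinearMap.mem_range_self TY u⟩ :=
      Subtype.ext (LinearMap.quotKerEquivRange_apply_mk TY u)
    show ((LinearMap.ker TY).liftQ TX hker)
        ((LinearMap.quotKerEquivRange TY).symm ⟨TY u, LinearMap.mem_range_self TY u⟩) = TX u
    rw [← h1, LinearEquiv.symm_apply_apply, Submodule.liftQ_apply]
  have hnorm : ∀ s : ↥(LinearMap.range TY), ‖g s‖ = ‖(s : EuclideanSpace ℝ κ)‖ := by
    rintro ⟨sv, u, rfl⟩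
    have h2 : ⟪TX u, TX u⟫ = ⟪TY u, TY u⟫ := hinner u u
    rw [real_inner_self_eq_norm_sq, real_inner_self_eq_norm_sq] at h2
    have h3 : g ⟨TY u, LinearMap.mem_range_self TY u⟩ = TX u := hgapp u
    calc ‖g ⟨TY u, _⟩‖ = ‖TX u‖ := by rw [h3]
      _ = Real.sqrt (‖TX u‖ ^ 2) := (Real.sqrt_sq (norm_nonneg _)).symm
      _ = Real.sqrt (‖TY u‖ ^ 2) := by rw [h2]
      _ = ‖TY u‖ := Real.sqrt_sq (norm_nonneg _)
  let L : ↥(LinearMap.range TY) →ₗᵢ[ℝ] EuclideanSpace ℝ κ := ⟨g, hnorm⟩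
  have he : ∀ u : ι → ℝ, L.extend (TY u) = TX u := by
    intro u
    have h1 : L.extend ((⟨TY u, LinearMap.mem_range_self TY u⟩ :
        ↥(LinearMap.range TY)) : EuclideanSpace ℝ κ)
        = L ⟨TY u, LinearMap.mem_range_self TY u⟩ := L.extend_apply _
    exact h1.trans (hgapp u)
  set M : Matrix κ κ ℝ := Matrix.toEuclideanLin.symm L.extend.toLinearMap with hMdef
  have hMe : ∀ v : κ → ℝ, (L.extend (WithLp.toLp 2 v)).ofLp = M *ᵥ v := by
    intro v
    have h1 : Matrix.toEuclideanLin M = L.extend.toLinearMap :=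
      LinearEquiv.apply_symm_apply _ _
    calc (L.extend (WithLp.toLp 2 v)).ofLp = (Matrix.toEuclideanLin M (WithLp.toLp 2 v)).ofLp := by rw [h1]; rfl
      _ = M *ᵥ v := by rw [Matrix.toEuclideanLin_apply]
  have hMY : M * Yᵀ = Xᵀ := by
    ext i j
    have h1 : M *ᵥ (Yᵀ *ᵥ Pi.single j 1) = Xᵀ *ᵥ Pi.single j 1 :=
      (hMe (Yᵀ *ᵥ Pi.single j 1)).symm.trans (congrArg WithLp.ofLp (he (Pi.single j 1)))
    rw [Matrix.mulVec_mulVec] at h1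
    rw [Matrix.mulVec_single, Matrix.mulVec_single] at h1
    simpa using congrFun h1 i
  have hMM : Mᵀ * M = 1 := by
    ext i j
    have h1 := L.extend.inner_map_map (WithLp.toLp 2 (Pi.single i 1 : κ → ℝ))
      (WithLp.toLp 2 (Pi.single j 1 : κ → ℝ))
    rw [hipdot, hipdot, hMe, hMe, WithLp.ofLp_toLp, WithLp.ofLp_toLp] at h1
    rw [Matrix.mulVec_single_one, Matrix.mulVec_single_one] at h1
    have h2 : ∑ k, M.col i k * M.col j k = (Mᵀ * M) i j := by
      simp [Matrix.mul_apply, Matrix.transpose_apply]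
    have h3 : ∑ k, (Pi.single i 1 : κ → ℝ) k * (Pi.single j 1 : κ → ℝ) k
        = (1 : Matrix κ κ ℝ) i j := by
      by_cases hij : i = j
      · subst hij
        simp [Pi.single_apply, Matrix.one_apply]
      · rw [Matrix.one_apply_ne hij]
        refine Finset.sum_eq_zero fun k _ => ?_
        by_cases hk : k = i
        · subst hk
          simp [Pi.single_apply, Ne.symm hij, hij]
        · simp [Pi.single_apply, hk]
    rw [h2, h3] at h1
    exact h1
  refine ⟨Mᵀ, ?_, ?_⟩
  · rw [Matrix.transpose_transpose]
    exact hMM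
  · calc X = (Xᵀ)ᵀ := (Matrix.transpose_transpose X).symm
      _ = (M * Yᵀ)ᵀ := by rw [hMY]
      _ = Y * Mᵀ := by rw [Matrix.transpose_mul, Matrix.transpose_transpose]

end Polar

section Transfer

variable {ι κ : Type*}

lemma map_stdPi_of_sq [Fintype ι] [Fintype κ] [DecidableEq ι] [DecidableEq κ]
    (f : ι → κ) (hf : Function.Injective f) (X : Matrix ι κ ℝ) (Y : Matrix ι ι ℝ)
    (h : X * Xᵀ = Y * Yᵀ) :
    (stdPi κ).map X.mulVec = (stdPi ι).map Y.mulVec := by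
  classical
  set E : Matrix ι κ ℝ := Matrix.of fun q k => if f q = k then 1 else 0 with hEdef
  have hEE : E * Eᵀ = 1 := by
    ext q q'
    rw [Matrix.mul_apply, Matrix.one_apply]
    simp only [E, Matrix.of_apply, Matrix.transpose_apply, ite_mul, one_mul, zero_mul]
    rw [Finset.sum_ite_eq Finset.univ (f q) fun k => if f q' = k then (1 : ℝ) else 0]
    simp [hf.eq_iff, eq_comm]
  have hYE : (Y * E) * (Y * E)ᵀ = Y * Yᵀ := by
    rw [Matrix.transpose_mul, ← Matrix.mul_assoc, Matrix.mul_assoc Y E Eᵀ, hEE, Matrix.mul_one]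
  obtain ⟨O, hO, hXO⟩ := exists_orthogonal_factor X (Y * E) (h.trans hYE.symm)
  have hEmul : E.mulVec = fun x (q : ι) => x (f q) := by
    funext x q
    show ∑ k, E q k * x k = x (f q)
    simp only [E, Matrix.of_apply, ite_mul, one_mul, zero_mul]
    rw [Finset.sum_ite_eq Finset.univ (f q) x]
    simp
  calc (stdPi κ).map X.mulVec
      = (stdPi κ).map (Y * E * O).mulVec := by rw [hXO]
    _ = ((stdPi κ).map O.mulVec).map (Y * E).mulVec := by
        rw [Measure.map_map (measurable_mulVec _) (measurable_mulVec _)]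
        congr 1
        funext x
        show (Y * E * O) *ᵥ x = (Y * E) *ᵥ (O *ᵥ x)
        rw [Matrix.mulVec_mulVec]
    _ = (stdPi κ).map (Y * E).mulVec := by rw [map_stdPi_orthogonal O hO]
    _ = ((stdPi κ).map E.mulVec).map Y.mulVec := by
        rw [Measure.map_map (measurable_mulVec _) (measurable_mulVec _)]
        congr 1
        funext x
        show (Y * E) *ᵥ x = Y *ᵥ (E *ᵥ x)
        rw [Matrix.mulVec_mulVec]
    _ = (stdPi ι).map Y.mulVec := by
        rw [hEmul, map_stdPi_eval f hf]

lemma mul_vecMulVec' {a b c : Type*} [Fintype b] (M : Matrix a b ℝ) (u : b → ℝ) (v : c → ℝ) :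
    M * Matrix.vecMulVec u v = Matrix.vecMulVec (M *ᵥ u) v := by
  ext i j
  simp [Matrix.mul_apply, Matrix.vecMulVec_apply, Matrix.mulVec, dotProduct,
    Finset.sum_mul, mul_assoc]

lemma vecMulVec_mul' {a b c : Type*} [Fintype b] (u : a → ℝ) (v : b → ℝ) (N : Matrix b c ℝ) :
    Matrix.vecMulVec u v * N = Matrix.vecMulVec u (v ᵥ* N) := by
  ext i j
  simp [Matrix.mul_apply, Matrix.vecMulVec_apply, Matrix.vecMul, dotProduct,
    Finset.mul_sum, mul_assoc]

lemma real_transpose_eq_of_isHermitian {d : Type*} {A : Matrix d d ℝ} (hA : A.IsHermitian) :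
    Aᵀ = A := by
  ext i j
  have h1 := congrFun (congrFun (congrArg (fun B => B) hA) i) j
  simp only [Matrix.conjTranspose_apply, star_trivial] at h1
  rw [Matrix.transpose_apply]
  exact h1

end Transfer

section KronAlgebra

open Kronecker

variable {n m : ℕ} (Q : Matrix (Fin n) (Fin m) ℝ)

lemma kron_transpose_self : (Qᵀ ⊗ₖ Qᵀ)ᵀ = Q ⊗ₖ Q := by
  rw [show Qᵀ ⊗ₖ Qᵀ = (Q ⊗ₖ Q)ᵀ from Matrix.kroneckerMap_transpose _ _ _,
    Matrix.transpose_transpose]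

lemma kron_mul_transpose_self (hQ : Qᵀ * Q = 1) :
    (Qᵀ ⊗ₖ Qᵀ) * (Qᵀ ⊗ₖ Qᵀ)ᵀ = 1 := by
  rw [kron_transpose_self, ← Matrix.mul_kronecker_mul, hQ, Matrix.one_kronecker_one]

lemma kron_mul_commMat : (Qᵀ ⊗ₖ Qᵀ) * commMat n = commMat m * (Qᵀ ⊗ₖ Qᵀ) := by
  ext p q
  have hL : ((Qᵀ ⊗ₖ Qᵀ) * commMat n) p q = (Qᵀ ⊗ₖ Qᵀ) p (q.2, q.1) := by
    rw [Matrix.mul_apply, Finset.sum_eq_single (q.2, q.1)]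
    · rw [show commMat n (q.2, q.1) q = 1 from by simp [commMat], mul_one]
    · intro r _ hr
      have hnr : ¬(r.1 = q.2 ∧ r.2 = q.1) := fun ⟨h1, h2⟩ => hr (Prod.ext h1 h2)
      simp [commMat, hnr]
    · intro hmem
      exact absurd (Finset.mem_univ _) hmem
  have hR : (commMat m * (Qᵀ ⊗ₖ Qᵀ)) p q = (Qᵀ ⊗ₖ Qᵀ) (p.2, p.1) q := by
    rw [Matrix.mul_apply, Finset.sum_eq_single (p.2, p.1)]
    · rw [show commMat m p (p.2, p.1) = 1 from by simp [commMat], one_mul]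
    · intro r _ hr
      have hnr : ¬(p.1 = r.2 ∧ p.2 = r.1) := fun ⟨h1, h2⟩ => hr (Prod.ext h2.symm h1.symm)
      simp [commMat, hnr]
    · intro hmem
      exact absurd (Finset.mem_univ _) hmem
  rw [hL, hR]
  simp only [Matrix.kroneckerMap_apply, Matrix.transpose_apply]
  ring

lemma kron_mulVec_vecM_one (hQ : Qᵀ * Q = 1) :
    (Qᵀ ⊗ₖ Qᵀ) *ᵥ vecM (1 : Matrix (Fin n) (Fin n) ℝ)
      = vecM (1 : Matrix (Fin m) (Fin m) ℝ) := by
  funext p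
  show ∑ r : Fin n × Fin n, (Qᵀ ⊗ₖ Qᵀ) p r * vecM (1 : Matrix (Fin n) (Fin n) ℝ) r
      = vecM (1 : Matrix (Fin m) (Fin m) ℝ) p
  rw [Fintype.sum_prod_type]
  simp only [vecM, Matrix.one_apply, Matrix.kroneckerMap_apply, Matrix.transpose_apply,
    mul_ite, mul_one, mul_zero]
  have h1 : ∀ a : Fin n, (∑ b : Fin n, if a = b then Q a p.1 * Q b p.2 else 0)
      = Q a p.1 * Q a p.2 := by
    intro a
    rw [Finset.sum_ite_eq Finset.univ a fun b => Q a p.1 * Q b p.2]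
    simp
  rw [Finset.sum_congr rfl fun a _ => h1 a]
  have h2 : ∑ a : Fin n, Q a p.1 * Q a p.2 = (Qᵀ * Q) p.1 p.2 := by
    simp [Matrix.mul_apply, Matrix.transpose_apply]
  rw [h2, hQ, Matrix.one_apply]

lemma kron_conj_Mmat (hQ : Qᵀ * Q = 1) : (Qᵀ ⊗ₖ Qᵀ) * Mmat n * (Qᵀ ⊗ₖ Qᵀ)ᵀ = Mmat m := by
  have hAAt := kron_mul_transpose_self Q hQ
  rw [Mmat, Matrix.mul_add, Matrix.mul_add, Matrix.mul_one, Matrix.add_mul, Matrix.add_mul]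
  rw [hAAt]
  rw [kron_mul_commMat Q, Matrix.mul_assoc (commMat m), hAAt, Matrix.mul_one]
  rw [mul_vecMulVec', vecMulVec_mul', Matrix.vecMul_transpose, kron_mulVec_vecM_one Q hQ]
  rfl

end KronAlgebra

open Kronecker in
theorem map_centeredGaussian_kron (n m : ℕ) (hn : 1 ≤ n) (hm : 1 ≤ m)
    (c : ℝ) (hc : 0 < c) (Q : Matrix (Fin n) (Fin m) ℝ) (hQ : Qᵀ * Q = 1)
    (hMn : (c • Mmat n).PosSemidef) (hMm : (c • Mmat m).PosSemidef) :
    (centeredGaussian (c • Mmat n) hMn).map (fun x => (Qᵀ ⊗ₖ Qᵀ).mulVec x) =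
      centeredGaussian (c • Mmat m) hMm := by
  classical
  have hmn : m ≤ n := by
    have h1 : (1 : Matrix (Fin m) (Fin m) ℝ).rank = m := by
      rw [Matrix.rank_one, Fintype.card_fin]
    have h2 : (Qᵀ * Q).rank ≤ n := by
      refine le_trans (Matrix.rank_mul_le_left Qᵀ Q) ?_
      refine le_trans (Matrix.rank_le_card_width Qᵀ) ?_
      rw [Fintype.card_fin]
    rw [hQ, h1] at h2
    exact h2
  have hRnt : hMn.sqrtᵀ = hMn.sqrt :=
    real_transpose_eq_of_isHermitian hMn.sqrt_isHermitian
  have hRmt : hMm.sqrtᵀ = hMm.sqrt :=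
    real_transpose_eq_of_isHermitian hMm.sqrt_isHermitian
  have halg : ((Qᵀ ⊗ₖ Qᵀ) * hMn.sqrt) * ((Qᵀ ⊗ₖ Qᵀ) * hMn.sqrt)ᵀ
      = hMm.sqrt * hMm.sqrtᵀ := by
    rw [Matrix.transpose_mul, hRnt, hRmt]
    calc (Qᵀ ⊗ₖ Qᵀ) * hMn.sqrt * (hMn.sqrt * (Qᵀ ⊗ₖ Qᵀ)ᵀ)
        = (Qᵀ ⊗ₖ Qᵀ) * (hMn.sqrt * hMn.sqrt) * (Qᵀ ⊗ₖ Qᵀ)ᵀ := by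
          rw [Matrix.mul_assoc, Matrix.mul_assoc, Matrix.mul_assoc]
      _ = (Qᵀ ⊗ₖ Qᵀ) * (c • Mmat n) * (Qᵀ ⊗ₖ Qᵀ)ᵀ := by rw [hMn.sqrt_mul_self]
      _ = c • ((Qᵀ ⊗ₖ Qᵀ) * Mmat n * (Qᵀ ⊗ₖ Qᵀ)ᵀ) := by
          rw [Matrix.mul_smul, Matrix.smul_mul]
      _ = c • Mmat m := by rw [kron_conj_Mmat Q hQ]
      _ = hMm.sqrt * hMm.sqrt := hMm.sqrt_mul_self.symm
  set f : Fin m × Fin m → Fin n × Fin n := fun p => (p.1.castLE hmn, p.2.castLE hmn) with hfdef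
  have hf : Function.Injective f := by
    intro p q hpq
    have h1 := congrArg Prod.fst hpq
    have h2 := congrArg Prod.snd hpq
    simp only [f] at h1 h2
    exact Prod.ext (Fin.castLE_injective hmn h1) (Fin.castLE_injective hmn h2)
  show (centeredGaussian _ hMn).map (fun x => (Qᵀ ⊗ₖ Qᵀ) *ᵥ x) = centeredGaussian _ hMm
  rw [centeredGaussian_eq, centeredGaussian_eq]
  rw [Measure.map_map (measurable_mulVec (Qᵀ ⊗ₖ Qᵀ)) (measurable_mulVec hMn.sqrt)]
  have hcomp : ((fun x => (Qᵀ ⊗ₖ Qᵀ) *ᵥ x) ∘ fun x : (Fin n × Fin n) → ℝ => hMn.sqrt *ᵥ x)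
      = fun x => ((Qᵀ ⊗ₖ Qᵀ) * hMn.sqrt) *ᵥ x := by
    funext x
    simp [Function.comp, Matrix.mulVec_mulVec]
  rw [hcomp]
  exact map_stdPi_of_sq f hf ((Qᵀ ⊗ₖ Qᵀ) * hMn.sqrt) hMm.sqrt halg
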